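/- Let Ẽ^+ = {(x_0, x_1, …) : x_n ∈ O_{C_p}/π_F, x_{n+1}^q = x_n for all n}, with valuation val_E(x) = lim_{n→∞} q^n val_p(x̂_n) where x̂_n ∈ O_{C_p} lifts x_n. Then val_E is a well-defined valuation (independent of the choice of lifts), Ẽ^+ is a perfect ring of characteristic p, complete for val_E, and if ū = (ū_0, ū_1, …) is the element formed from the reductions of the Lubin-Tate torsion points u_n, then val_E(ū) = q/((q−1)e). -/

import Mathlib

set_option maxHeartbeats 2000000 in
set_option synthInstance.maxHeartbeats 1000000 in
/-- The tilt `Ẽ⁺ = lim_{x↦x^q} O_{C_p}/π_F` (presented here by an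
isomorphism `Φ` of `E` onto the ring of `q`-power-compatible sequences) carries a
well-defined valuation `val_E(x) = lim_n q^n val_p(x̂_n)` (independent of the choice of
lifts), is a perfect ring of characteristic `p`, is complete for `val_E`, and the element
`ū` formed from the reductions of the Lubin-Tate torsion points `u_n` satisfies
`val_E(ū) = q/((q−1)e)`. -/
theorem statement10 (p q e h : ℕ) [hp : Fact p.Prime] (hq : q = p ^ h) (hh : 1 ≤ h)
    (he : 1 ≤ e)
    (K : Type*) [Field K] (v : K → ℝ)
    (hvmul : ∀ x y : K, x ≠ 0 → y ≠ 0 → v (x * y) = v x + v y)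
    (hvadd : ∀ x y : K, x ≠ 0 → y ≠ 0 → x + y ≠ 0 → min (v x) (v y) ≤ v (x + y))
    (hvp : v (p : K) = 1)
    (hAC : IsAlgClosed K)
    (O : Subring K) (hO : ∀ x : K, x ≠ 0 → (x ∈ O ↔ 0 ≤ v x))
    (π : K) (hπO : π ∈ O) (hπv : v π = 1 / (e : ℝ))
    (E : Type*) [CommRing E]
    (Φ : E →+* (ℕ → O ⧸ Ideal.span {(⟨π, hπO⟩ : O)}))
    (hΦinj : Function.Injective Φ)
    (hΦcomp : ∀ (x : E) (n : ℕ), Φ x (n + 1) ^ q = Φ x n)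
    (hΦsurj : ∀ y : ℕ → O ⧸ Ideal.span {(⟨π, hπO⟩ : O)},
      (∀ n, y (n + 1) ^ q = y n) → ∃ x, Φ x = y)
    (u : ℕ → K) (hu0 : u 0 = 0) (hu1 : u 1 ≠ 0) (huO : ∀ n, u n ∈ O)
    (hurec : ∀ n, u (n + 1) ^ q + π * u (n + 1) = u n)
    (ubar : E) (hubar : ∀ n, Φ ubar n = Ideal.Quotient.mk _ (⟨u n, huO n⟩ : O)) :
    CharP E p ∧
    (∀ x : E, ∃! y : E, y ^ p = x) ∧
    ∃ valE : E → ℝ,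
      (∀ x : E, x ≠ 0 → ∀ lift : ℕ → O,
        (∀ n, Ideal.Quotient.mk (Ideal.span {(⟨π, hπO⟩ : O)}) (lift n) = Φ x n) →
          (∀ᶠ n in Filter.atTop, (lift n : K) ≠ 0) ∧
          Filter.Tendsto (fun n => (q : ℝ) ^ n * v ((lift n : K))) Filter.atTop
            (nhds (valE x))) ∧
      (∀ x y : E, x ≠ 0 → y ≠ 0 → valE (x * y) = valE x + valE y) ∧
      (∀ x y : E, x ≠ 0 → y ≠ 0 → x + y ≠ 0 → min (valE x) (valE y) ≤ valE (x + y)) ∧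
      (∀ f : ℕ → E,
        (∀ C : ℝ, ∃ N, ∀ m n, N ≤ m → N ≤ n →
          f m = f n ∨ (f m - f n ≠ 0 ∧ C ≤ valE (f m - f n))) →
        ∃ L : E, ∀ C : ℝ, ∃ N, ∀ n, N ≤ n → f n = L ∨ (f n - L ≠ 0 ∧ C ≤ valE (f n - L))) ∧
      valE ubar = (q : ℝ) / (((q : ℝ) - 1) * (e : ℝ)) := by
  classical
  -- numerics
  have hp2 : 2 ≤ p := hp.out.two_le
  have hq2 : 2 ≤ q := hq ▸ le_trans hp2 (Nat.le_self_pow (by omega) p)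
  have hqR1 : (1:ℝ) < (q:ℝ) := by exact_mod_cast lt_of_lt_of_le one_lt_two hq2
  have hqR2 : (2:ℝ) ≤ (q:ℝ) := by exact_mod_cast hq2
  have hqR0 : (0:ℝ) < (q:ℝ) := lt_trans zero_lt_one hqR1
  have hqne : (q:ℝ) ≠ 0 := ne_of_gt hqR0
  have heR1 : (1:ℝ) ≤ (e:ℝ) := by exact_mod_cast he
  have heR0 : (0:ℝ) < (e:ℝ) := lt_of_lt_of_le zero_lt_one heR1
  have hene : (e:ℝ) ≠ 0 := ne_of_gt heR0
  have hie1 : 1/(e:ℝ) ≤ 1 := by rw [div_le_one heR0]; exact heR1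
  have hie0 : (0:ℝ) < 1/(e:ℝ) := by positivity
  have hmkout : ∀ c : O ⧸ (Ideal.span {(⟨π, hπO⟩ : O)}), Ideal.Quotient.mk (Ideal.span {(⟨π, hπO⟩ : O)}) c.out = c :=
    fun c => Quotient.out_eq' c
  -- basic valuation facts
  have hv1 : v 1 = 0 := by
    have h := hvmul 1 1 one_ne_zero one_ne_zero; rw [mul_one] at h; linarith
  have hvn1 : v (-1 : K) = 0 := by
    have h := hvmul (-1) (-1) (by norm_num) (by norm_num)
    rw [neg_mul_neg, one_mul, hv1] at h; linarith
  have hvneg : ∀ x : K, x ≠ 0 → v (-x) = v x := by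
    intro x hx
    have h := hvmul (-1) x (by norm_num) hx
    rw [neg_one_mul] at h; rw [h, hvn1]; ring
  have hvpow : ∀ x : K, x ≠ 0 → ∀ k : ℕ, v (x ^ k) = (k:ℝ) * v x := by
    intro x hx k
    induction k with
    | zero => simpa using hv1
    | succ n ih =>
        rw [pow_succ, hvmul _ _ (pow_ne_zero n hx) hx, ih]; push_cast; ring
  have hπ0 : π ≠ 0 := by
    intro h0
    have h := hurec 0
    rw [hu0, h0, zero_mul, add_zero] at h
    exact hu1 ((pow_eq_zero_iff (show q ≠ 0 by omega)).mp h)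
  have hOv : ∀ a : O, (a:K) ≠ 0 → 0 ≤ v (a:K) := fun a ha => (hO a ha).mp a.2
  have hspan_val : ∀ a : O, a ∈ (Ideal.span {(⟨π, hπO⟩ : O)}) → (a:K) ≠ 0 → 1/(e:ℝ) ≤ v (a:K) := by
    intro a ha hane
    rw [Ideal.mem_span_singleton] at ha
    obtain ⟨b, hb⟩ := ha
    have hbK : (a:K) = π * (b:K) := by rw [hb]; push_cast; ring
    have hbne : (b:K) ≠ 0 := by intro h0; rw [h0, mul_zero] at hbK; exact hane hbK
    have hmm := hvmul π (b:K) hπ0 hbne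
    rw [← hbK] at hmm
    have hb0 := hOv b hbne
    rw [hmm, hπv]; linarith
  have hnot_span : ∀ a : O, a ∉ (Ideal.span {(⟨π, hπO⟩ : O)}) → (a:K) ≠ 0 ∧ v (a:K) < 1/(e:ℝ) := by
    intro a ha
    have hane : (a:K) ≠ 0 := by
      intro h0
      apply ha
      have h1 : a = 0 := Subtype.ext h0
      rw [h1]; exact Ideal.zero_mem _
    refine ⟨hane, ?_⟩
    by_contra hge
    push_neg at hge
    apply ha
    have hbne : (a:K) / π ≠ 0 := div_ne_zero hane hπ0
    have hmul : (a:K) / π * π = (a:K) := div_mul_cancel₀ _ hπ0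
    have hvb : v ((a:K)/π) = v (a:K) - 1/e := by
      have h1 := hvmul ((a:K)/π) π hbne hπ0
      rw [hmul, hπv] at h1; linarith
    have hbO : (a:K)/π ∈ O := (hO _ hbne).mpr (by rw [hvb]; linarith)
    rw [Ideal.mem_span_singleton]
    refine ⟨⟨(a:K)/π, hbO⟩, Subtype.ext ?_⟩
    push_cast
    rw [mul_comm]; exact hmul.symm
  have hval_congr : ∀ a b : O, (a:K) ≠ 0 → v (a:K) < 1/(e:ℝ) → b - a ∈ (Ideal.span {(⟨π, hπO⟩ : O)}) →
      (b:K) ≠ 0 ∧ v (b:K) = v (a:K) := by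
    intro a b hane hva hmem
    by_cases hba : b = a
    · subst hba; exact ⟨hane, rfl⟩
    · have hdK : ((b - a : O):K) = (b:K) - (a:K) := by push_cast; ring
      have hdne : ((b - a : O):K) ≠ 0 := by
        rw [hdK]; exact sub_ne_zero.mpr (fun hc => hba (Subtype.ext hc))
      have hvd := hspan_val _ hmem hdne
      rw [hdK] at hdne hvd
      have hbne : (b:K) ≠ 0 := by
        intro h0
        rw [h0, zero_sub, hvneg _ hane] at hvd
        linarith
      have h1 := hvadd (a:K) ((b:K) - (a:K)) hane hdne
        (by rw [add_sub_cancel]; exact hbne)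
      rw [add_sub_cancel, min_eq_left (by linarith)] at h1
      have heq2 : (b:K) + -((b:K) - (a:K)) = (a:K) := by ring
      have h2 := hvadd (b:K) (-((b:K) - (a:K))) hbne (neg_ne_zero.mpr hdne)
        (by rw [heq2]; exact hane)
      rw [heq2, hvneg _ hdne] at h2
      refine ⟨hbne, ?_⟩
      rcases le_total (v ((b:K) - (a:K))) (v (b:K)) with hc | hc
      · rw [min_eq_right hc] at h2; linarith
      · rw [min_eq_left hc] at h2; linarith
  -- coordinates
  have hcoord : ∀ (x : E) (n : ℕ), Φ x n ≠ 0 → ∀ m, n ≤ m → Φ x m ≠ 0 := by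
    intro x n hn m hm
    induction m, hm using Nat.le_induction with
    | base => exact hn
    | succ m hm ih =>
        intro h0
        apply ih
        rw [← hΦcomp x m, h0, zero_pow (show q ≠ 0 by omega)]
  have hΦne0 : ∀ x : E, x ≠ 0 → ∃ n, Φ x n ≠ 0 := by
    intro x hx
    by_contra hall
    push_neg at hall
    exact hx (hΦinj (by funext n; simp [hall n]))
  have hkey : ∀ (x : E) (n : ℕ), Φ x n ≠ 0 → ∀ r s : O,
      Ideal.Quotient.mk (Ideal.span {(⟨π, hπO⟩ : O)}) r = Φ x n → Ideal.Quotient.mk (Ideal.span {(⟨π, hπO⟩ : O)}) s = Φ x (n+1) →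
      (s:K) ≠ 0 ∧ (q:ℝ) * v (s:K) = v (r:K) := by
    intro x n hn r s hr hs
    have hrI : r ∉ (Ideal.span {(⟨π, hπO⟩ : O)}) := fun hmem => hn (hr ▸ Ideal.Quotient.eq_zero_iff_mem.mpr hmem)
    obtain ⟨hrne, hrv⟩ := hnot_span r hrI
    have hn1 : Φ x (n+1) ≠ 0 := fun h0 => hn (by rw [← hΦcomp x n, h0, zero_pow (show q ≠ 0 by omega)])
    have hsI : s ∉ (Ideal.span {(⟨π, hπO⟩ : O)}) := fun hmem => hn1 (hs ▸ Ideal.Quotient.eq_zero_iff_mem.mpr hmem)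
    obtain ⟨hsne, _⟩ := hnot_span s hsI
    have hmem : s^q - r ∈ (Ideal.span {(⟨π, hπO⟩ : O)}) := by
      apply Ideal.Quotient.eq.mp
      rw [map_pow, hs, hΦcomp, hr]
    have hcongr := hval_congr r (s^q) hrne hrv hmem
    have hcoe : ((s^q : O):K) = (s:K)^q := by push_cast; ring
    rw [hcoe, hvpow _ hsne q] at hcongr
    exact ⟨hsne, hcongr.2⟩
  have hglob : ∀ (x : E) (n : ℕ), Φ x n ≠ 0 → ∀ r : O, Ideal.Quotient.mk (Ideal.span {(⟨π, hπO⟩ : O)}) r = Φ x n →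
      ∀ m, n ≤ m → ∀ s : O, Ideal.Quotient.mk (Ideal.span {(⟨π, hπO⟩ : O)}) s = Φ x m →
      (s:K) ≠ 0 ∧ (q:ℝ)^m * v (s:K) = (q:ℝ)^n * v (r:K) := by
    intro x n hn r hr m hm
    induction m, hm using Nat.le_induction with
    | base =>
        intro s hs
        have hrI : r ∉ (Ideal.span {(⟨π, hπO⟩ : O)}) := fun hmem => hn (hr ▸ Ideal.Quotient.eq_zero_iff_mem.mpr hmem)
        obtain ⟨hrne, hrv⟩ := hnot_span r hrI
        have hmem : s - r ∈ (Ideal.span {(⟨π, hπO⟩ : O)}) := Ideal.Quotient.eq.mp (hs.trans hr.symm)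
        have hcongr := hval_congr r s hrne hrv hmem
        exact ⟨hcongr.1, by rw [hcongr.2]⟩
    | succ m hm ih =>
        intro s hs
        have hm0 : Φ x m ≠ 0 := hcoord x n hn m hm
        have ht : Ideal.Quotient.mk (Ideal.span {(⟨π, hπO⟩ : O)}) (Φ x m).out = Φ x m := hmkout _
        obtain ⟨htne, hteq⟩ := ih _ ht
        obtain ⟨hsne, hseq⟩ := hkey x m hm0 _ s ht hs
        refine ⟨hsne, ?_⟩
        rw [pow_succ]
        calc (q:ℝ)^m * (q:ℝ) * v (s:K) = (q:ℝ)^m * ((q:ℝ) * v (s:K)) := by ring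
          _ = (q:ℝ)^m * v (((Φ x m).out : O) : K) := by rw [hseq]
          _ = (q:ℝ)^n * v (r:K) := hteq
  -- the valuation
  obtain ⟨valE, hvalE⟩ : ∃ valE : E → ℝ, ∀ x : E, x ≠ 0 → ∀ n, Φ x n ≠ 0 →
      ∀ r : O, Ideal.Quotient.mk (Ideal.span {(⟨π, hπO⟩ : O)}) r = Φ x n →
      (r:K) ≠ 0 ∧ 0 ≤ v (r:K) ∧ v (r:K) < 1/(e:ℝ) ∧ valE x = (q:ℝ)^n * v (r:K) := by
    refine ⟨fun x =>
      if hx : ∃ n, Φ x n ≠ 0 then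
        (q:ℝ)^(Nat.find hx) * v (((Φ x (Nat.find hx)).out : O) : K) else 0, ?_⟩
    intro x hx n hn r hr
    have hrI : r ∉ (Ideal.span {(⟨π, hπO⟩ : O)}) := fun hmem => hn (hr ▸ Ideal.Quotient.eq_zero_iff_mem.mpr hmem)
    obtain ⟨hrne, hrv⟩ := hnot_span r hrI
    refine ⟨hrne, hOv r hrne, hrv, ?_⟩
    have hex : ∃ k, Φ x k ≠ 0 := ⟨n, hn⟩
    have hfind : Φ x (Nat.find hex) ≠ 0 := Nat.find_spec hex
    have hle : Nat.find hex ≤ n := Nat.find_min' hex hn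
    have hout : Ideal.Quotient.mk (Ideal.span {(⟨π, hπO⟩ : O)}) (Φ x (Nat.find hex)).out = Φ x (Nat.find hex) :=
      hmkout _
    have hg := hglob x (Nat.find hex) hfind _ hout n hle r hr
    show (if hx : ∃ n, Φ x n ≠ 0 then
        (q:ℝ)^(Nat.find hx) * v (((Φ x (Nat.find hx)).out : O) : K) else 0)
      = (q:ℝ)^n * v (r:K)
    rw [dif_pos hex]
    exact hg.2.symm
  -- property 1 : limits of lifts
  have hprop1 : ∀ x : E, x ≠ 0 → ∀ lift : ℕ → O,
      (∀ n, Ideal.Quotient.mk (Ideal.span {(⟨π, hπO⟩ : O)}) (lift n) = Φ x n) →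
      (∀ᶠ n in Filter.atTop, (lift n : K) ≠ 0) ∧
      Filter.Tendsto (fun n => (q : ℝ) ^ n * v ((lift n : K))) Filter.atTop
        (nhds (valE x)) := by
    intro x hx lift hlift
    obtain ⟨m, hm⟩ := hΦne0 x hx
    have hmono : ∀ n, m ≤ n → Φ x n ≠ 0 := hcoord x m hm
    constructor
    · exact Filter.eventually_atTop.mpr
        ⟨m, fun n hn => (hvalE x hx n (hmono n hn) _ (hlift n)).1⟩
    · refine Filter.Tendsto.congr' ?_ (tendsto_const_nhds (x := valE x))
      exact Filter.eventually_atTop.mpr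
        ⟨m, fun n hn => (hvalE x hx n (hmono n hn) _ (hlift n)).2.2.2⟩
  -- products
  have hmul' : ∀ x y : E, x ≠ 0 → y ≠ 0 → (x * y ≠ 0 ∧ valE (x*y) = valE x + valE y) := by
    intro x y hx hy
    obtain ⟨mx, hmx⟩ := hΦne0 x hx
    obtain ⟨my, hmy⟩ := hΦne0 y hy
    obtain ⟨k, hk⟩ : ∃ k:ℕ, (valE x + valE y) * (e:ℝ) < (q:ℝ)^k :=
      pow_unbounded_of_one_lt _ hqR1
    have hxn : Φ x (max (max mx my) k) ≠ 0 :=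
      hcoord x mx hmx _ (le_trans (le_max_left _ _) (le_max_left _ _))
    have hyn : Φ y (max (max mx my) k) ≠ 0 :=
      hcoord y my hmy _ (le_trans (le_max_right _ _) (le_max_left _ _))
    set n := max (max mx my) k with hndef
    have hrx := hvalE x hx n hxn _ (hmkout (Φ x n))
    have hry := hvalE y hy n hyn _ (hmkout (Φ y n))
    have hcoe : (((Φ x n).out * (Φ y n).out : O) : K)
        = (((Φ x n).out : O):K) * (((Φ y n).out : O):K) := by push_cast; ring
    have hmk : Ideal.Quotient.mk (Ideal.span {(⟨π, hπO⟩ : O)}) ((Φ x n).out * (Φ y n).out) = Φ (x*y) n := by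
      rw [map_mul, hmkout, hmkout, map_mul]
      rfl
    have hne : (((Φ x n).out : O):K) * (((Φ y n).out : O):K) ≠ 0 :=
      mul_ne_zero hrx.1 hry.1
    have hqn0 : (0:ℝ) < (q:ℝ)^n := pow_pos hqR0 n
    have hkn : (q:ℝ)^k ≤ (q:ℝ)^n := pow_le_pow_right₀ hqR1.le (le_max_right _ _)
    have h1 : (q:ℝ)^n * (v (((Φ x n).out : O):K) + v (((Φ y n).out : O):K))
        = valE x + valE y := by
      rw [mul_add, ← hrx.2.2.2, ← hry.2.2.2]
    have hlt : v (((Φ x n).out : O):K) + v (((Φ y n).out : O):K) < 1/(e:ℝ) := by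
      rw [← mul_lt_mul_iff_right₀ hqn0, h1, mul_one_div, lt_div_iff₀ heR0]
      linarith
    have hΦxyn : Φ (x*y) n ≠ 0 := by
      intro h0
      have hmem : (Φ x n).out * (Φ y n).out ∈ (Ideal.span {(⟨π, hπO⟩ : O)}) :=
        Ideal.Quotient.eq_zero_iff_mem.mp (hmk.trans h0)
      have hge := hspan_val _ hmem (by rw [hcoe]; exact hne)
      rw [hcoe, hvmul _ _ hrx.1 hry.1] at hge
      linarith
    have hxy : x * y ≠ 0 := by
      intro h0
      apply hΦxyn
      rw [h0, map_zero]
      rfl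
    have hfinal := hvalE (x*y) hxy n hΦxyn _ hmk
    refine ⟨hxy, ?_⟩
    rw [hfinal.2.2.2, hcoe, hvmul _ _ hrx.1 hry.1, mul_add, ← hrx.2.2.2, ← hry.2.2.2]
  -- ultrametric
  have hprop3 : ∀ x y : E, x ≠ 0 → y ≠ 0 → x + y ≠ 0 →
      min (valE x) (valE y) ≤ valE (x+y) := by
    intro x y hx hy hxy
    obtain ⟨mx, hmx⟩ := hΦne0 x hx
    obtain ⟨my, hmy⟩ := hΦne0 y hy
    obtain ⟨ms, hms⟩ := hΦne0 (x+y) hxy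
    have hxn : Φ x (max (max mx my) ms) ≠ 0 :=
      hcoord x mx hmx _ (le_trans (le_max_left _ _) (le_max_left _ _))
    have hyn : Φ y (max (max mx my) ms) ≠ 0 :=
      hcoord y my hmy _ (le_trans (le_max_right _ _) (le_max_left _ _))
    have hsn : Φ (x+y) (max (max mx my) ms) ≠ 0 :=
      hcoord _ ms hms _ (le_max_right _ _)
    set n := max (max mx my) ms with hndef
    have hrx := hvalE x hx n hxn _ (hmkout (Φ x n))
    have hry := hvalE y hy n hyn _ (hmkout (Φ y n))
    have hmk : Ideal.Quotient.mk (Ideal.span {(⟨π, hπO⟩ : O)}) ((Φ x n).out + (Φ y n).out) = Φ (x+y) n := by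
      rw [map_add, hmkout, hmkout, map_add]
      rfl
    have hsum := hvalE (x+y) hxy n hsn _ hmk
    have hcoe : (((Φ x n).out + (Φ y n).out : O):K)
        = (((Φ x n).out : O):K) + (((Φ y n).out : O):K) := by push_cast; ring
    have hne3 : (((Φ x n).out : O):K) + (((Φ y n).out : O):K) ≠ 0 := by
      rw [← hcoe]; exact hsum.1
    have hadd := hvadd _ _ hrx.1 hry.1 hne3
    rw [hsum.2.2.2, hcoe, hrx.2.2.2, hry.2.2.2]
    have hqn0 : (0:ℝ) ≤ (q:ℝ)^n := (pow_pos hqR0 n).le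
    rw [← mul_min_of_nonneg _ _ hqn0]
    exact mul_le_mul_of_nonneg_left hadd hqn0
  -- characteristic p
  have hpO : ((p:ℕ) : O) ∈ (Ideal.span {(⟨π, hπO⟩ : O)}) := by
    by_cases hpK : ((p:ℕ) : K) = 0
    · have h1 : ((p:ℕ):O) = 0 := by
        apply Subtype.ext; push_cast; exact_mod_cast hpK
      rw [h1]; exact Ideal.zero_mem _
    · have hbne : ((p:ℕ):K)/π ≠ 0 := div_ne_zero hpK hπ0
      have hmul2 : ((p:ℕ):K)/π * π = ((p:ℕ):K) := div_mul_cancel₀ _ hπ0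
      have hvb : v (((p:ℕ):K)/π) = 1 - 1/e := by
        have h1 := hvmul _ π hbne hπ0
        rw [hmul2, hπv, hvp] at h1
        linarith
      have hbO : ((p:ℕ):K)/π ∈ O := (hO _ hbne).mpr (by rw [hvb]; linarith)
      rw [Ideal.mem_span_singleton]
      refine ⟨⟨_, hbO⟩, Subtype.ext ?_⟩
      push_cast
      rw [mul_comm]
      exact hmul2.symm
  have hQp : ((p:ℕ) : O ⧸ (Ideal.span {(⟨π, hπO⟩ : O)})) = 0 := by
    rw [← map_natCast (Ideal.Quotient.mk (Ideal.span {(⟨π, hπO⟩ : O)})) p]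
    exact Ideal.Quotient.eq_zero_iff_mem.mpr hpO
  have h1Q : (1 : O ⧸ (Ideal.span {(⟨π, hπO⟩ : O)})) ≠ 0 := by
    intro h0
    have hmem : (1:O) ∈ (Ideal.span {(⟨π, hπO⟩ : O)}) := by
      rw [← Ideal.Quotient.eq_zero_iff_mem, map_one]; exact h0
    have hge := hspan_val 1 hmem (by norm_num)
    rw [show ((1:O):K) = 1 from rfl, hv1] at hge
    linarith
  haveI hcharQ : CharP (O ⧸ (Ideal.span {(⟨π, hπO⟩ : O)})) p := by
    have hdvd : ringChar (O ⧸ (Ideal.span {(⟨π, hπO⟩ : O)})) ∣ p := ringChar.dvd hQp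
    rcases (hp.out.eq_one_or_self_of_dvd _ hdvd) with h1 | hpp
    · exfalso
      haveI := ringChar.charP (O ⧸ (Ideal.span {(⟨π, hπO⟩ : O)}))
      have hc := CharP.cast_eq_zero (O ⧸ (Ideal.span {(⟨π, hπO⟩ : O)})) (ringChar (O ⧸ (Ideal.span {(⟨π, hπO⟩ : O)})))
      rw [h1] at hc
      exact h1Q (by simpa using hc)
    · rw [← hpp]; exact ringChar.charP _
  have hcharE : CharP E p := by
    constructor
    intro n
    rw [← CharP.cast_eq_zero_iff (O ⧸ (Ideal.span {(⟨π, hπO⟩ : O)})) p n]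
    constructor
    · intro hn
      have h0 : Φ (n:E) 0 = 0 := by rw [hn, map_zero]; rfl
      rw [map_natCast Φ n] at h0
      simpa using h0
    · intro hn
      apply hΦinj
      rw [map_zero, map_natCast Φ n]
      funext k
      show ((n:ℕ) : O ⧸ (Ideal.span {(⟨π, hπO⟩ : O)})) = 0
      exact hn
  -- reducedness
  have hreduced : ∀ d : E, d ^ p = 0 → d = 0 := by
    intro d hdp
    by_contra hd
    obtain ⟨m, hm⟩ := hΦne0 d hd
    obtain ⟨k, hk⟩ : ∃ k:ℕ, valE d * ((p:ℝ) * (e:ℝ)) < (q:ℝ)^k :=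
      pow_unbounded_of_one_lt _ hqR1
    have hdn : Φ d (max m k) ≠ 0 := hcoord d m hm _ (le_max_left _ _)
    have hr := hvalE d hd (max m k) hdn _ (hmkout _)
    have hrp : ((Φ d (max m k)).out)^p ∈ (Ideal.span {(⟨π, hπO⟩ : O)}) := by
      rw [← Ideal.Quotient.eq_zero_iff_mem, map_pow, hmkout]
      have h2 : Φ (d^p) (max m k) = 0 := by rw [hdp, map_zero]; rfl
      rw [← h2, map_pow]
      rfl
    have hcoep : ((((Φ d (max m k)).out)^p : O):K) = ((((Φ d (max m k)).out):O):K)^p := by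
      push_cast; ring
    have hpne : ((((Φ d (max m k)).out)^p : O):K) ≠ 0 := by
      rw [hcoep]; exact pow_ne_zero _ hr.1
    have hge := hspan_val _ hrp hpne
    rw [hcoep, hvpow _ hr.1 p] at hge
    have hkn : (q:ℝ)^k ≤ (q:ℝ)^(max m k) := pow_le_pow_right₀ hqR1.le (le_max_right _ _)
    have h5 : (q:ℝ)^(max m k) * (1/(e:ℝ))
        ≤ (q:ℝ)^(max m k) * ((p:ℝ) * v ((((Φ d (max m k)).out):O):K)) :=
      mul_le_mul_of_nonneg_left hge (pow_nonneg hqR0.le _)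
    have h6 : (q:ℝ)^(max m k) * ((p:ℝ) * v ((((Φ d (max m k)).out):O):K))
        = valE d * (p:ℝ) := by
      rw [hr.2.2.2]; ring
    have h8 : (q:ℝ)^(max m k) * (1/(e:ℝ)) ≤ valE d * (p:ℝ) := by rw [← h6]; exact h5
    rw [mul_one_div, div_le_iff₀ heR0] at h8
    nlinarith
  -- perfectness
  have hperfect : ∀ x : E, ∃! y : E, y ^ p = x := by
    haveI := hcharE
    intro x
    obtain ⟨y, hy⟩ := hΦsurj (fun n => Φ x (n+1) ^ (p^(h-1))) (by
      intro n
      show (Φ x (n+1+1) ^ (p^(h-1))) ^ q = Φ x (n+1) ^ (p^(h-1))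
      rw [← pow_mul, mul_comm (p^(h-1)) q, pow_mul, hΦcomp])
    have hyp : y ^ p = x := by
      apply hΦinj
      funext n
      rw [map_pow]
      show (Φ y n)^p = Φ x n
      rw [congrFun hy n]
      show (Φ x (n+1) ^ (p^(h-1)))^p = Φ x n
      rw [← pow_mul, show p^(h-1)*p = q by rw [hq, ← pow_succ, Nat.sub_add_cancel hh],
        hΦcomp]
    refine ⟨y, hyp, fun z hz => ?_⟩
    have hsub : (z - y)^p = 0 := by rw [sub_pow_char, hz, hyp, sub_self]
    exact sub_eq_zero.mp (hreduced _ hsub)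
  -- completeness
  have hprop4 : ∀ f : ℕ → E,
      (∀ C : ℝ, ∃ N, ∀ m n, N ≤ m → N ≤ n →
        f m = f n ∨ (f m - f n ≠ 0 ∧ C ≤ valE (f m - f n))) →
      ∃ L : E, ∀ C : ℝ, ∃ N, ∀ n, N ≤ n →
        f n = L ∨ (f n - L ≠ 0 ∧ C ≤ valE (f n - L)) := by
    intro f hf
    choose N hN using hf
    have hstab : ∀ (k m n : ℕ), N ((q:ℝ)^k) ≤ m → N ((q:ℝ)^k) ≤ n →
        Φ (f m) k = Φ (f n) k := by
      intro k m n hm hn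
      rcases hN ((q:ℝ)^k) m n hm hn with heq | ⟨hne, hC⟩
      · rw [heq]
      · by_contra hne2
        have hd : Φ (f m - f n) k ≠ 0 := by
          rw [map_sub]
          exact fun h0 => hne2 (by rwa [Pi.sub_apply, sub_eq_zero] at h0)
        have hv2 := hvalE _ hne k hd _ (hmkout _)
        have hq0 : (0:ℝ) < (q:ℝ)^k := pow_pos hqR0 k
        have hlt : valE (f m - f n) < (q:ℝ)^k := by
          rw [hv2.2.2.2]
          calc (q:ℝ)^k * v (((Φ (f m - f n) k).out : O):K)
              < (q:ℝ)^k * (1/(e:ℝ)) := mul_lt_mul_of_pos_left hv2.2.2.1 hq0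
            _ ≤ (q:ℝ)^k * 1 := by nlinarith
            _ = (q:ℝ)^k := mul_one _
        linarith
    obtain ⟨L, hL⟩ := hΦsurj (fun k => Φ (f (N ((q:ℝ)^k))) k) (by
      intro k
      have h1 : Φ (f (N ((q:ℝ)^(k+1)))) (k+1)
          = Φ (f (max (N ((q:ℝ)^k)) (N ((q:ℝ)^(k+1))))) (k+1) :=
        hstab (k+1) _ _ le_rfl (le_max_right _ _)
      have h2 : Φ (f (N ((q:ℝ)^k))) k
          = Φ (f (max (N ((q:ℝ)^k)) (N ((q:ℝ)^(k+1))))) k :=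
        hstab k _ _ le_rfl (le_max_left _ _)
      show Φ (f (N ((q:ℝ)^(k+1)))) (k+1) ^ q = Φ (f (N ((q:ℝ)^k))) k
      rw [h1, h2, hΦcomp])
    refine ⟨L, fun C => ?_⟩
    obtain ⟨k, hk⟩ : ∃ k:ℕ, C * (e:ℝ) < (q:ℝ)^k := pow_unbounded_of_one_lt _ hqR1
    refine ⟨(Finset.range (k+1)).sup (fun j => N ((q:ℝ)^j)), fun n hn => ?_⟩
    have hcoords : ∀ j, j ≤ k → Φ (f n) j = Φ L j := by
      intro j hj
      rw [hL]
      exact hstab j n _ (le_trans (Finset.le_sup (f := fun j => N ((q:ℝ)^j))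
        (Finset.mem_range.mpr (by omega))) hn) le_rfl
    by_cases hfn : f n = L
    · exact Or.inl hfn
    · have hd : f n - L ≠ 0 := sub_ne_zero.mpr hfn
      refine Or.inr ⟨hd, ?_⟩
      have hzero : ∀ j, j ≤ k → Φ (f n - L) j = 0 := by
        intro j hj
        rw [map_sub, Pi.sub_apply, hcoords j hj, sub_self]
      have hex := hΦne0 _ hd
      have hm0 : Φ (f n - L) (Nat.find hex) ≠ 0 := Nat.find_spec hex
      have hklt : k < Nat.find hex := by
        by_contra hle
        push_neg at hle
        exact hm0 (hzero _ hle)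
      have hm1 : 1 ≤ Nat.find hex := by omega
      have hzprev : Φ (f n - L) (Nat.find hex - 1) = 0 := by
        have hmin := Nat.find_min hex (m := Nat.find hex - 1) (by omega)
        simpa using hmin
      have hv2 := hvalE _ hd (Nat.find hex) hm0 _ (hmkout _)
      have hmem : ((Φ (f n - L) (Nat.find hex)).out)^q ∈ (Ideal.span {(⟨π, hπO⟩ : O)}) := by
        rw [← Ideal.Quotient.eq_zero_iff_mem, map_pow, hmkout]
        rw [show Nat.find hex = (Nat.find hex - 1) + 1 by omega, hΦcomp]
        exact hzprev
      have hcoeq : ((((Φ (f n - L) (Nat.find hex)).out)^q : O):K)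
          = ((((Φ (f n - L) (Nat.find hex)).out):O):K)^q := by push_cast; ring
      have hqne2 : ((((Φ (f n - L) (Nat.find hex)).out)^q : O):K) ≠ 0 := by
        rw [hcoeq]; exact pow_ne_zero _ hv2.1
      have hge := hspan_val _ hmem hqne2
      rw [hcoeq, hvpow _ hv2.1 q] at hge
      have hkm : (q:ℝ)^k ≤ (q:ℝ)^(Nat.find hex - 1) := pow_le_pow_right₀ hqR1.le (by omega)
      have hpows : (q:ℝ)^(Nat.find hex) = (q:ℝ)^(Nat.find hex - 1) * (q:ℝ) := by
        rw [← pow_succ]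
        congr 1
        omega
      rw [hv2.2.2.2, hpows]
      have h5 : (q:ℝ)^(Nat.find hex - 1) * (1/(e:ℝ))
          ≤ (q:ℝ)^(Nat.find hex - 1) * ((q:ℝ) * v ((((Φ (f n - L) (Nat.find hex)).out):O):K)) :=
        mul_le_mul_of_nonneg_left hge (pow_nonneg hqR0.le _)
      have h7 : C ≤ (q:ℝ)^(Nat.find hex - 1) / (e:ℝ) := by
        rw [le_div_iff₀ heR0]
        linarith
      calc C ≤ (q:ℝ)^(Nat.find hex - 1) / (e:ℝ) := h7
        _ ≤ (q:ℝ)^(Nat.find hex - 1) * ((q:ℝ) * v ((((Φ (f n - L) (Nat.find hex)).out):O):K)) := by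
            rw [div_eq_mul_one_div]
            exact h5
        _ = (q:ℝ)^(Nat.find hex - 1) * (q:ℝ) * v ((((Φ (f n - L) (Nat.find hex)).out):O):K) := by
            ring
  -- the torsion-point element
  have h1e : (1/(e:ℝ)) * (e:ℝ) = 1 := by field_simp
  have hD0 : (0:ℝ) < ((q:ℝ)-1)*(e:ℝ) := by nlinarith
  have huv : ∀ n, 1 ≤ n → u n ≠ 0 ∧ v (u n) = 1/((q:ℝ)^(n-1) * (((q:ℝ)-1) * (e:ℝ))) := by
    intro n hn
    induction n, hn using Nat.le_induction with
    | base =>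
      refine ⟨hu1, ?_⟩
      have hr := hurec 0
      rw [hu0] at hr
      have hB : π * u 1 ≠ 0 := mul_ne_zero hπ0 hu1
      have hA : u 1 ^ q = -(π * u 1) := eq_neg_of_add_eq_zero_left hr
      have hv2 : v (u 1 ^ q) = v (π * u 1) := by rw [hA, hvneg _ hB]
      rw [hvpow _ hu1 q, hvmul _ _ hπ0 hu1, hπv] at hv2
      show v (u 1) = 1/((q:ℝ)^0 * (((q:ℝ)-1)*(e:ℝ)))
      rw [pow_zero, one_mul, eq_div_iff (ne_of_gt hD0)]
      have h8 : ((q:ℝ)-1) * v (u 1) = 1/(e:ℝ) := by linarith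
      calc v (u 1) * (((q:ℝ)-1)*(e:ℝ)) = (((q:ℝ)-1) * v (u 1)) * (e:ℝ) := by ring
        _ = (1/(e:ℝ)) * (e:ℝ) := by rw [h8]
        _ = 1 := h1e
    | succ n hn ih =>
      obtain ⟨hun, hvn⟩ := ih
      have hne1 : u (n+1) ≠ 0 := by
        intro h0
        apply hun
        rw [← hurec n, h0]
        rw [zero_pow (show q ≠ 0 by omega), mul_zero, add_zero]
      have ha0 : 0 ≤ v (u (n+1)) := (hO _ hne1).mp (huO (n+1))
      have hA : u (n+1)^q ≠ 0 := pow_ne_zero _ hne1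
      have hB : π * u (n+1) ≠ 0 := mul_ne_zero hπ0 hne1
      have hvA : v (u (n+1)^q) = (q:ℝ) * v (u (n+1)) := hvpow _ hne1 q
      have hvB : v (π * u (n+1)) = 1/(e:ℝ) + v (u (n+1)) := by
        rw [hvmul _ _ hπ0 hne1, hπv]
      have hpow1 : (1:ℝ) ≤ (q:ℝ)^(n-1) := one_le_pow₀ hqR1.le
      have hcn_le : v (u n) ≤ 1/(((q:ℝ)-1)*(e:ℝ)) := by
        rw [hvn]
        apply one_div_le_one_div_of_le hD0
        nlinarith
      have hmin := hvadd _ _ hA hB (by rw [hurec n]; exact hun)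
      rw [hurec n, hvA, hvB] at hmin
      have hclaim : (q:ℝ) * v (u (n+1)) < 1/(e:ℝ) + v (u (n+1)) := by
        by_contra hge
        push_neg at hge
        have hstep : (1:ℝ)/(e:ℝ) ≤ ((q:ℝ)-1) * v (u (n+1)) := by linarith
        have hmul3 := mul_le_mul_of_nonneg_right hstep heR0.le
        rw [h1e] at hmul3
        have ha_ge : 1/(((q:ℝ)-1)*(e:ℝ)) ≤ v (u (n+1)) := by
          rw [div_le_iff₀ hD0]
          nlinarith
        have hqD : (q:ℝ)/(((q:ℝ)-1)*(e:ℝ)) ≤ (q:ℝ) * v (u (n+1)) := by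
          rw [div_le_iff₀ hD0]
          nlinarith
        have hsplit : (q:ℝ)/(((q:ℝ)-1)*(e:ℝ))
            = ((q:ℝ)-1)/(((q:ℝ)-1)*(e:ℝ)) + 1/(((q:ℝ)-1)*(e:ℝ)) := by
          rw [← add_div, sub_add_cancel]
        have h1eq : 1/(e:ℝ) = ((q:ℝ)-1)/(((q:ℝ)-1)*(e:ℝ)) := by
          rw [div_eq_div_iff hene (ne_of_gt hD0)]
          ring
        have hqD2 : (q:ℝ)/(((q:ℝ)-1)*(e:ℝ)) ≤ 1/(e:ℝ) + v (u (n+1)) := by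
          rw [hsplit, h1eq]
          linarith
        have hfinmin := le_trans (le_min hqD hqD2) hmin
        have hlt2 : (1:ℝ)/(((q:ℝ)-1)*(e:ℝ)) < (q:ℝ)/(((q:ℝ)-1)*(e:ℝ)) :=
          (div_lt_div_iff_of_pos_right hD0).mpr hqR1
        linarith
      have hgeq : (q:ℝ) * v (u (n+1)) ≤ v (u n) := by
        rw [min_eq_left hclaim.le] at hmin
        exact hmin
      have hleq : v (u n) ≤ (q:ℝ) * v (u (n+1)) := by
        have heq2 : u (n+1)^q = u n + (-(π * u (n+1))) := by rw [← hurec n]; ring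
        have h2 := hvadd (u n) (-(π * u (n+1))) hun (neg_ne_zero.mpr hB)
          (by rw [← heq2]; exact hA)
        rw [← heq2, hvA, hvneg _ hB, hvB] at h2
        rcases le_total (v (u n)) (1/(e:ℝ) + v (u (n+1))) with hc | hc
        · rwa [min_eq_left hc] at h2
        · rw [min_eq_right hc] at h2
          linarith
      have han : v (u n) = (q:ℝ) * v (u (n+1)) := le_antisymm hleq hgeq
      refine ⟨hne1, ?_⟩
      show v (u (n+1)) = 1/((q:ℝ)^n * (((q:ℝ)-1)*(e:ℝ)))
      have hq' : (q:ℝ)^n = (q:ℝ)^(n-1) * (q:ℝ) := by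
        rw [← pow_succ]
        congr 1
        omega
      rw [hvn] at han
      rw [hq', eq_div_iff (by positivity)]
      have hX0 : ((q:ℝ)^(n-1) * (((q:ℝ)-1)*(e:ℝ))) ≠ 0 := by positivity
      have h10 : (q:ℝ) * v (u (n+1)) * ((q:ℝ)^(n-1) * (((q:ℝ)-1)*(e:ℝ))) = 1 := by
        rw [← han]
        exact one_div_mul_cancel hX0
      linear_combination h10
  have hu2 := huv 2 (by omega)
  have hΦu2 : Φ ubar 2 ≠ 0 := by
    rw [hubar 2]
    intro h0
    have hmem := Ideal.Quotient.eq_zero_iff_mem.mp h0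
    have hge := hspan_val _ hmem hu2.1
    rw [show (((⟨u 2, huO 2⟩ : O)):K) = u 2 from rfl, hu2.2] at hge
    have hlt : 1/((q:ℝ)^(2-1) * (((q:ℝ)-1)*(e:ℝ))) < 1/(e:ℝ) := by
      apply one_div_lt_one_div_of_lt heR0
      rw [show (2:ℕ)-1 = 1 from rfl, pow_one]
      linarith [mul_lt_mul_of_pos_right hqR1 hD0,
        mul_le_mul_of_nonneg_right (show (1:ℝ) ≤ (q:ℝ)-1 by linarith [hqR2]) heR0.le]
    linarith
  have hubar0 : ubar ≠ 0 := by
    intro h0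
    apply hΦu2
    rw [h0, map_zero]
    rfl
  have hfin := hvalE ubar hubar0 2 hΦu2 ⟨u 2, huO 2⟩ (hubar 2).symm
  refine ⟨hcharE, hperfect, valE, hprop1, (fun x y hx hy => (hmul' x y hx hy).2),
    hprop3, hprop4, ?_⟩
  rw [hfin.2.2.2, show v (((⟨u 2, huO 2⟩ : O)):K) = v (u 2) from rfl, hu2.2]
  rw [show (2:ℕ)-1 = 1 from rfl, pow_one, mul_one_div,
    div_eq_div_iff (by positivity) (ne_of_gt hD0)]
  ring
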